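/- arXiv:1812.00316 — 2 statements merged into one kernel-verified Lean document; each statement's English description precedes it below -/
import Mathlib

section
/- For n ≥ 1, b_n = a_n·G - a_n', where G = e·E_1(1) is the Euler-Gompertz constant, a_n = [z^n] exp(z/(1-z)), and the sequence a_n' is defined by a_0' = 0, a_1' = 1, and n·a_n' - (2n-1)·a_{n-1}' + (n-2)·a_{n-2}' equals -1 for n = 2 and 0 for n ≥ 3. -/
open MeasureTheory Set Real

/-- The exponential integral `E₁(x) = ∫_x^∞ e^{-t}/t dt`. -/
noncomputable def E1 (x : ℝ) : ℝ := ∫ t in Set.Ioi x, Real.exp (-t) / t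

lemma E1_integrable {x : ℝ} (hx : 0 < x) :
    IntegrableOn (fun t => Real.exp (-t) / t) (Set.Ioi x) := by
  have hg : IntegrableOn (fun t => Real.exp (-(1:ℝ) * t) * x⁻¹) (Set.Ioi x) :=
    (exp_neg_integrableOn_Ioi x one_pos).mul_const _
  refine Integrable.mono' hg ?_ ?_
  · refine (Measurable.aestronglyMeasurable ?_)
    exact (Real.measurable_exp.comp measurable_neg).div measurable_id
  · filter_upwards [ae_restrict_mem measurableSet_Ioi] with t ht
    have h0 : 0 < t := hx.trans ht
    rw [Real.norm_eq_abs, abs_div, abs_of_pos (Real.exp_pos _), abs_of_pos h0]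
    rw [div_eq_mul_inv, neg_one_mul]
    exact mul_le_mul_of_nonneg_left (inv_anti₀ hx ht.le) (Real.exp_pos _).le

lemma E1_contOn : ContinuousOn (fun t : ℝ => Real.exp (-t) / t) (Set.Ioi 0) := by
  apply ContinuousOn.div (Real.continuous_exp.comp continuous_neg).continuousOn
    continuousOn_id
  intro t ht; exact ne_of_gt ht

lemma E1_eq {x : ℝ} (hx : 0 < x) :
    E1 x = E1 1 - ∫ t in (1:ℝ)..x, Real.exp (-t) / t := by
  rcases le_total x 1 with h | h
  · have hsplit : (Set.Ioc x 1) ∪ (Set.Ioi 1) = Set.Ioi x := Set.Ioc_union_Ioi_eq_Ioi h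
    have := MeasureTheory.setIntegral_union (f := fun t => Real.exp (-t) / t) (μ := volume)
      (Set.Ioc_disjoint_Ioi le_rfl) measurableSet_Ioi
      ((E1_integrable hx).mono_set (by rw [← hsplit]; exact Set.subset_union_left))
      ((E1_integrable hx).mono_set (by rw [← hsplit]; exact Set.subset_union_right))
    rw [hsplit] at this
    rw [intervalIntegral.integral_symm, intervalIntegral.integral_of_le h]
    show E1 x = E1 1 - -(∫ t in Set.Ioc x 1, Real.exp (-t) / t)
    unfold E1; rw [this]; ring
  · have hsplit : (Set.Ioc 1 x) ∪ (Set.Ioi x) = Set.Ioi 1 := Set.Ioc_union_Ioi_eq_Ioi h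
    have := MeasureTheory.setIntegral_union (f := fun t => Real.exp (-t) / t) (μ := volume)
      (Set.Ioc_disjoint_Ioi le_rfl) measurableSet_Ioi
      ((E1_integrable one_pos).mono_set (by rw [← hsplit]; exact Set.subset_union_left))
      ((E1_integrable one_pos).mono_set (by rw [← hsplit]; exact Set.subset_union_right))
    rw [hsplit] at this
    rw [intervalIntegral.integral_of_le h]
    unfold E1; rw [this]; ring

lemma E1_hasDerivAt {x : ℝ} (hx : 0 < x) :
    HasDerivAt E1 (-(Real.exp (-x) / x)) x := by
  have hInt : IntervalIntegrable (fun t => Real.exp (-t) / t) volume 1 x := by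
    apply ContinuousOn.intervalIntegrable
    apply E1_contOn.mono
    intro t ht
    rcases Set.mem_uIcc.1 ht with ⟨h1, _⟩ | ⟨h1, _⟩
    · exact lt_of_lt_of_le one_pos h1
    · exact lt_of_lt_of_le hx h1
  have hmeas : StronglyMeasurableAtFilter (fun t => Real.exp (-t) / t) (nhds x) volume := by
    refine ⟨Set.Ioi 0, Ioi_mem_nhds hx, ?_⟩
    exact (E1_contOn.aestronglyMeasurable measurableSet_Ioi)
  have hcont : ContinuousAt (fun t => Real.exp (-t) / t) x :=
    (Real.continuous_exp.comp continuous_neg).continuousAt.div continuousAt_id (ne_of_gt hx)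
  have h1 : HasDerivAt (fun u => ∫ t in (1:ℝ)..u, Real.exp (-t) / t) (Real.exp (-x) / x) x :=
    intervalIntegral.integral_hasDerivAt_right hInt hmeas hcont
  have h2 : HasDerivAt (fun u => E1 1 - ∫ t in (1:ℝ)..u, Real.exp (-t) / t)
      (-(Real.exp (-x) / x)) x := h1.const_sub _
  apply h2.congr_of_eventuallyEq
  filter_upwards [Ioi_mem_nhds hx] with u hu
  exact E1_eq hu

lemma y_hasDerivAt {x : ℝ} (hx : x < 1) :
    HasDerivAt (fun z : ℝ => 1 / (1 - z)) (1 / (1 - x) ^ 2) x := by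
  have h : (1:ℝ) - x ≠ 0 := by intro h; nlinarith [h]
  have := ((hasDerivAt_id x).const_sub 1).inv h
  have h2 : -(-1) / (1 - x) ^ 2 = 1 / (1 - x) ^ 2 := by ring
  convert this using 1
  · rfl
  · rfl
  · funext z; simp [one_div]
  · simp [h2]

lemma F_hasDerivAt {x : ℝ} (hx : |x| < 1) :
    HasDerivAt (fun z : ℝ => Real.exp (1 / (1 - z)) * E1 (1 / (1 - z)))
      (Real.exp (1 / (1 - x)) * E1 (1 / (1 - x)) / (1 - x) ^ 2 - 1 / (1 - x)) x := by
  have hx1 : x < 1 := lt_of_le_of_lt (le_abs_self x) hx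
  have h1x : (0:ℝ) < 1 - x := by linarith
  have hy : 0 < 1 / (1 - x) := by positivity
  have hd := y_hasDerivAt hx1
  have hE : HasDerivAt (fun z : ℝ => E1 (1 / (1 - z)))
      (-(Real.exp (-(1 / (1 - x))) / (1 / (1 - x))) * (1 / (1 - x) ^ 2)) x :=
    (E1_hasDerivAt hy).comp x (h := fun z : ℝ => 1 / (1 - z)) hd
  have hexp : HasDerivAt (fun z : ℝ => Real.exp (1 / (1 - z)))
      (Real.exp (1 / (1 - x)) * (1 / (1 - x) ^ 2)) x :=
    (Real.hasDerivAt_exp _).comp x hd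
  have := hexp.mul hE
  convert this using 1
  · rfl
  · rfl
  · rfl
  rw [Real.exp_neg]
  field_simp
  ring

lemma A_hasDerivAt {x : ℝ} (hx : |x| < 1) :
    HasDerivAt (fun z : ℝ => Real.exp (z / (1 - z)))
      (Real.exp (x / (1 - x)) / (1 - x) ^ 2) x := by
  have hx1 : x < 1 := lt_of_le_of_lt (le_abs_self x) hx
  have h : (1:ℝ) - x ≠ 0 := by intro h; nlinarith [h]
  have hq : HasDerivAt (fun z : ℝ => z / (1 - z)) (1 / (1 - x) ^ 2) x := by
    have := (hasDerivAt_id x).div ((hasDerivAt_id x).const_sub 1) h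
    convert this using 1
    · rfl
    · rfl
    · rfl
    simp only [id]
    field_simp
    ring
  have := (Real.hasDerivAt_exp _).comp x hq
  convert this using 1
  · rfl
  · rfl
  · rfl
  ring

lemma ps_deriv (h : ℕ → ℝ)
    (hsum : ∀ x : ℝ, |x| < 1 → Summable (fun n => h n * x ^ n))
    {x : ℝ} (hx : |x| < 1) :
    Summable (fun n => h n * ((n : ℝ) * x ^ (n - 1))) ∧
      HasDerivAt (fun z : ℝ => ∑' n, h n * z ^ n)
        (∑' n, h n * ((n : ℝ) * x ^ (n - 1))) x := by
  set r : ℝ := (|x| + 1) / 2 with hr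
  set ρ : ℝ := (r + 1) / 2 with hρ
  have hax : 0 ≤ |x| := abs_nonneg x
  have hxr : |x| < r := by rw [hr]; linarith
  have hr0 : 0 < r := by rw [hr]; linarith
  have hrρ : r < ρ := by rw [hρ]; linarith [hxr, hx]
  have hρ0 : 0 < ρ := hr0.trans hrρ
  have hρ1 : ρ < 1 := by rw [hρ, hr]; linarith
  have hr1 : r < 1 := hrρ.trans hρ1
  have hrne : r ≠ 0 := ne_of_gt hr0
  have hρne : ρ ≠ 0 := ne_of_gt hρ0
  clear_value r
  clear_value ρ
  have hsρ : Summable fun n => |h n| * ρ ^ n := by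
    have h1 : Summable fun n => |h n * ρ ^ n| :=
      (summable_abs_iff).2 (hsum ρ (by rw [abs_of_pos hρ0]; exact hρ1))
    refine h1.congr fun n => ?_
    rw [abs_mul, abs_pow, abs_of_pos hρ0]
  set M : ℝ := ∑' n, |h n| * ρ ^ n with hM
  have hMn : ∀ n, |h n| * ρ ^ n ≤ M := fun n =>
    Summable.le_tsum hsρ n fun m _ => by positivity
  have hM0 : 0 ≤ M := le_trans (by positivity) (hMn 0)
  set u : ℕ → ℝ := fun n => (M / r) * ((n : ℝ) * (r / ρ) ^ n) with hu
  have hus : Summable u := by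
    have h1 : Summable fun n : ℕ => (n : ℝ) ^ 1 * (r / ρ) ^ n :=
      summable_pow_mul_geometric_of_norm_lt_one 1
        (by rw [Real.norm_eq_abs, abs_of_pos (by positivity)];
            exact (div_lt_one hρ0).2 hrρ)
    refine ((h1.mul_left (M / r)).congr fun n => ?_)
    rw [pow_one]
  have hbound : ∀ n : ℕ, ∀ y : ℝ, |y| ≤ r →
      ‖h n * ((n : ℝ) * y ^ (n - 1))‖ ≤ u n := by
    intro n y hyr
    cases n with
    | zero => simp [hu]
    | succ m =>
      have hhn : |h (m + 1)| ≤ M / ρ ^ (m + 1) :=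
        (le_div_iff₀ (pow_pos hρ0 _)).2 (hMn (m + 1))
      have h0y : 0 ≤ |y| := abs_nonneg y
      have key : ‖h (m + 1) * (((m : ℝ) + 1) * y ^ m)‖
          = |h (m + 1)| * (((m : ℝ) + 1) * |y| ^ m) := by
        rw [Real.norm_eq_abs, abs_mul, abs_mul, abs_pow]
        congr 2
        rw [abs_of_nonneg (by positivity)]
      calc ‖h (m + 1) * ((↑(m + 1) : ℝ) * y ^ (m + 1 - 1))‖
          = |h (m + 1)| * (((m : ℝ) + 1) * |y| ^ m) := by
            push_cast; exact key
        _ ≤ (M / ρ ^ (m + 1)) * (((m : ℝ) + 1) * r ^ m) := by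
            gcongr <;>
              first
                | exact hhn
                | exact hyr
                | positivity
                | exact div_nonneg hM0 (pow_pos hρ0 _).le
        _ = u (m + 1) := by
            simp only [hu]
            push_cast
            rw [div_pow]
            field_simp
            ring
  have hmem : x ∈ Set.Ioo (-r) r := by rw [Set.mem_Ioo, ← abs_lt]; exact hxr
  have hderiv := hasDerivAt_tsum_of_isPreconnected hus isOpen_Ioo
    (isPreconnected_Ioo)
    (g := fun n z => h n * z ^ n) (g' := fun n y => h n * ((n : ℝ) * y ^ (n - 1)))
    (fun n y _ => (hasDerivAt_pow n y).const_mul (h n))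
    (fun n y hy => hbound n y (abs_lt.2 ⟨hy.1, hy.2⟩).le)
    hmem (hsum x hx) hmem
  refine ⟨?_, hderiv⟩
  exact Summable.of_norm_bounded hus fun n => hbound n x hxr.le

lemma coeff_zero (e : ℕ → ℝ)
    (h : ∀ x : ℝ, |x| < 1 → HasSum (fun n => e n * x ^ n) 0) : ∀ n, e n = 0 := by
  intro n
  induction n using Nat.strong_induction_on with
  | _ n ih =>
  -- shifted sums
  have key : ∀ x : ℝ, 0 < x → x ≤ (1:ℝ)/2 →
      HasSum (fun k => e (k + n) * x ^ k) 0 := by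
    intro x hx0 hx2
    have hx1 : |x| < 1 := by rw [abs_of_pos hx0]; linarith
    have h1 : HasSum (fun k => e (k + n) * x ^ (k + n))
        (0 - ∑ i ∈ Finset.range n, e i * x ^ i) :=
      (hasSum_nat_add_iff' n).2 (h x hx1)
    have h2 : (∑ i ∈ Finset.range n, e i * x ^ i) = 0 :=
      Finset.sum_eq_zero fun i hi => by
        rw [ih i (Finset.mem_range.1 hi)]; ring
    rw [h2, sub_zero] at h1
    have h3 : HasSum (fun k => (e (k + n) * x ^ k) * x ^ n) 0 := by
      refine h1.congr_fun fun k => ?_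
      rw [pow_add]; ring
    have h4 := h3.div_const (x ^ n)
    rw [zero_div] at h4
    refine h4.congr_fun fun k => ?_
    field_simp
  -- the tail sum bound
  have hsq : Summable (fun k => |e (k + (n + 1))| * ((1:ℝ)/4) ^ k) := by
    have h0 := (key ((1:ℝ)/4) (by norm_num) (by norm_num)).summable
    have h1 : Summable (fun k => |e ((k + 1) + n) * ((1:ℝ)/4) ^ (k + 1)|) := by
      refine ((summable_nat_add_iff 1).2 h0).abs
    refine (Summable.div_const h1 ((1:ℝ)/4)).congr fun k => ?_
    have : (k + 1) + n = k + (n + 1) := by omega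
    rw [this, abs_mul, abs_pow, pow_succ]
    rw [abs_of_nonneg (by norm_num : ((0:ℝ)) ≤ 1/4)]
    field_simp
  set C : ℝ := ∑' k, |e (k + (n + 1))| * ((1:ℝ)/4) ^ k with hC
  have hC0 : 0 ≤ C := tsum_nonneg fun k => by positivity
  have hbound : ∀ x : ℝ, 0 < x → x ≤ (1:ℝ)/4 → |e n| ≤ x * C := by
    intro x hx0 hx4
    have hkey := key x hx0 (by linarith)
    have h1 : HasSum (fun k => e ((k + 1) + n) * x ^ (k + 1))
        (0 - ∑ i ∈ Finset.range 1, e (i + n) * x ^ i) :=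
      (hasSum_nat_add_iff' 1).2 hkey
    have h2 : (∑ i ∈ Finset.range 1, e (i + n) * x ^ i) = e n := by simp
    rw [h2, zero_sub] at h1
    have hen : e n = -∑' k, e ((k + 1) + n) * x ^ (k + 1) := by
      rw [h1.tsum_eq]; ring
    have hnorm : ∀ k : ℕ, ‖e ((k + 1) + n) * x ^ (k + 1)‖
        ≤ x * (|e (k + (n + 1))| * ((1:ℝ)/4) ^ k) := by
      intro k
      have : (k + 1) + n = k + (n + 1) := by omega
      rw [this, Real.norm_eq_abs, abs_mul, abs_pow, abs_of_pos hx0, pow_succ]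
      have hxk : x ^ k ≤ ((1:ℝ)/4) ^ k := pow_le_pow_left₀ hx0.le hx4 k
      calc |e (k + (n+1))| * (x ^ k * x)
          ≤ |e (k + (n+1))| * (((1:ℝ)/4) ^ k * x) := by
            gcongr
        _ = x * (|e (k + (n + 1))| * ((1:ℝ)/4) ^ k) := by ring
    have hsum2 : Summable (fun k => x * (|e (k + (n + 1))| * ((1:ℝ)/4) ^ k)) :=
      hsq.mul_left x
    calc |e n| = ‖∑' k, e ((k + 1) + n) * x ^ (k + 1)‖ := by
          rw [hen, Real.norm_eq_abs, abs_neg]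
      _ ≤ ∑' k, ‖e ((k + 1) + n) * x ^ (k + 1)‖ := by
          apply norm_tsum_le_tsum_norm
          exact hsum2.of_nonneg_of_le (fun k => norm_nonneg _) hnorm
      _ ≤ ∑' k, x * (|e (k + (n + 1))| * ((1:ℝ)/4) ^ k) := by
          apply Summable.tsum_le_tsum hnorm _ hsum2
          exact hsum2.of_nonneg_of_le (fun k => norm_nonneg _) hnorm
      _ = x * C := by rw [hC, tsum_mul_left]
  by_contra hne
  have h0 : 0 < |e n| := abs_pos.2 hne
  set x : ℝ := min ((1:ℝ)/4) (|e n| / (2 * (C + 1))) with hxdef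
  have hx0 : 0 < x := lt_min (by norm_num) (by positivity)
  have hx4 : x ≤ (1:ℝ)/4 := min_le_left _ _
  have hxC : x ≤ |e n| / (2 * (C + 1)) := min_le_right _ _
  have := hbound x hx0 hx4
  have h2 : x * C ≤ (|e n| / (2 * (C + 1))) * C := by
    apply mul_le_mul_of_nonneg_right hxC hC0
  have h3 : (|e n| / (2 * (C + 1))) * C < |e n| := by
    rw [div_mul_eq_mul_div, div_lt_iff₀ (by positivity)]
    nlinarith
  linarith

lemma rec_solve (h A : ℕ → ℝ) (hA0 : A 0 = 0) (hA1 : A 1 = 1)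
    (hA2 : (2:ℝ) * A 2 - 3 * A 1 + 0 * A 0 = -1)
    (hArec : ∀ n : ℕ, 3 ≤ n →
      (n : ℝ) * A n - (2 * n - 1) * A (n - 1) + ((n : ℝ) - 2) * A (n - 2) = 0)
    (hh0 : h 0 = 0)
    (he : ∀ n : ℕ, ((n:ℝ) + 1) * h (n+1) + (-2*(n:ℝ)) * h n
      + (if n = 0 then 0 else ((n:ℝ) - 1) * h (n-1)) + (-(h n))
      + (if n = 0 then (1:ℝ) else if n = 1 then -1 else 0) = 0) :
    ∀ n : ℕ, 1 ≤ n → h n = -(A n) := by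
  have h1 : h 1 = -1 := by
    have := he 0
    simp only [if_pos rfl] at this
    push_cast at this
    nlinarith [this, hh0]
  have h2 : h 2 = -1 := by
    have := he 1
    norm_num at this
    nlinarith [this, h1]
  have hA2' : A 2 = 1 := by nlinarith [hA2, hA1]
  intro n
  induction n using Nat.strong_induction_on with
  | _ n ih =>
  intro hn1
  match n, hn1 with
  | 1, _ => rw [h1, hA1]
  | 2, _ => rw [h2, hA2']
  | (m+3), _ =>
    have heq := he (m+2)
    have hA := hArec (m+3) (by omega)
    have hne : m + 2 ≠ 0 := by omega
    have hne1 : m + 2 ≠ 1 := by omega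
    rw [if_neg hne, if_neg hne, if_neg hne1] at heq
    have e1 : m + 2 + 1 = m + 3 := by omega
    have e2 : m + 2 - 1 = m + 1 := by omega
    have e3 : m + 3 - 1 = m + 2 := by omega
    have e4 : m + 3 - 2 = m + 1 := by omega
    rw [e1, e2] at heq
    rw [e3, e4] at hA
    have ih2 : h (m+2) = -(A (m+2)) := ih (m+2) (by omega) (by omega)
    have ih1 : h (m+1) = -(A (m+1)) := ih (m+1) (by omega) (by omega)
    push_cast at heq hA
    have key : ((m:ℝ) + 3) * (h (m+3) + A (m+3)) = 0 := by
      linear_combination heq + hA + (2*(m:ℝ)+5) * ih2 - ((m:ℝ)+1) * ih1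
    have hm3 : ((m:ℝ) + 3) ≠ 0 := by positivity
    have := mul_eq_zero.1 key
    rcases this with hc | hc
    · exact absurd hc hm3
    · linarith

lemma series_ode (h : ℕ → ℝ)
    (hH : ∀ x : ℝ, |x| < 1 → HasSum (fun n => h n * x ^ n)
      (Real.exp (1 / (1 - x)) * E1 (1 / (1 - x))
        - Real.exp 1 * E1 1 * Real.exp (x / (1 - x)))) :
    ∀ n : ℕ, ((n:ℝ) + 1) * h (n+1) + (-2*(n:ℝ)) * h n
      + (if n = 0 then 0 else ((n:ℝ) - 1) * h (n-1)) + (-(h n))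
      + (if n = 0 then (1:ℝ) else if n = 1 then -1 else 0) = 0 := by
  set G : ℝ := Real.exp 1 * E1 1 with hG
  set e : ℕ → ℝ := fun n => ((n:ℝ) + 1) * h (n+1) + (-2*(n:ℝ)) * h n
      + (if n = 0 then 0 else ((n:ℝ) - 1) * h (n-1)) + (-(h n))
      + (if n = 0 then (1:ℝ) else if n = 1 then -1 else 0) with he
  show ∀ n, e n = 0
  apply coeff_zero
  intro x hx
  have hx1 : x < 1 := lt_of_le_of_lt (le_abs_self x) hx
  have hu : (1:ℝ) - x ≠ 0 := by intro hc; nlinarith [hc]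
  obtain ⟨hds, hdK⟩ := ps_deriv h (fun y hy => (hH y hy).summable) hx
  set D : ℝ := ∑' n, h n * ((n : ℝ) * x ^ (n - 1)) with hD
  have hmem : x ∈ Set.Ioo (-1:ℝ) 1 := by rw [Set.mem_Ioo, ← abs_lt]; exact hx
  have hdK' : HasDerivAt (fun z : ℝ => Real.exp (1 / (1 - z)) * E1 (1 / (1 - z))
      - G * Real.exp (z / (1 - z))) D x := by
    apply hdK.congr_of_eventuallyEq
    filter_upwards [isOpen_Ioo.mem_nhds hmem] with y hy
    exact ((hH y (abs_lt.2 ⟨hy.1, hy.2⟩)).tsum_eq).symm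
  have hFA : HasDerivAt (fun z : ℝ => Real.exp (1 / (1 - z)) * E1 (1 / (1 - z))
      - G * Real.exp (z / (1 - z)))
      ((Real.exp (1 / (1 - x)) * E1 (1 / (1 - x)) / (1 - x) ^ 2 - 1 / (1 - x))
        - G * (Real.exp (x / (1 - x)) / (1 - x) ^ 2)) x :=
    (F_hasDerivAt hx).sub ((A_hasDerivAt hx).const_mul G)
  have hDval : D = (Real.exp (1 / (1 - x)) * E1 (1 / (1 - x)) / (1 - x) ^ 2 - 1 / (1 - x))
        - G * (Real.exp (x / (1 - x)) / (1 - x) ^ 2) := hdK'.unique hFA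
  have S : HasSum (fun n => h n * ((n:ℝ) * x ^ (n - 1))) D := hds.hasSum
  -- T1
  have T1 : HasSum (fun n : ℕ => (((n:ℝ) + 1) * h (n+1)) * x ^ n) D := by
    have h1 := (hasSum_nat_add_iff' (f := fun n => h n * ((n:ℝ) * x ^ (n - 1))) 1).2 S
    have h0 : (∑ i ∈ Finset.range 1, h i * ((i:ℝ) * x ^ (i-1))) = 0 := by simp
    rw [h0, sub_zero] at h1
    refine h1.congr_fun fun k => ?_
    rw [Nat.add_sub_cancel]
    push_cast
    ring
  -- T2
  have T2 : HasSum (fun n : ℕ => ((-2*(n:ℝ)) * h n) * x ^ n) (-2 * x * D) := by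
    refine (S.mul_left (-2 * x)).congr_fun fun n => ?_
    cases n with
    | zero => simp
    | succ k =>
      simp only [Nat.add_sub_cancel]
      push_cast
      rw [pow_succ]
      ring
  -- T3
  have T3 : HasSum (fun n : ℕ =>
      (if n = 0 then (0:ℝ) else ((n:ℝ) - 1) * h (n-1)) * x ^ n) (x ^ 2 * D) := by
    have h1 : HasSum (fun k : ℕ =>
        (if k + 1 = 0 then (0:ℝ) else (((k+1:ℕ):ℝ) - 1) * h (k+1-1)) * x ^ (k+1))
        (x ^ 2 * D) := by
      refine (S.mul_left (x ^ 2)).congr_fun fun k => ?_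
      rw [if_neg (Nat.succ_ne_zero k), Nat.add_sub_cancel]
      cases k with
      | zero => simp
      | succ m =>
        simp only [Nat.add_sub_cancel]
        push_cast
        ring
    have h2 := (hasSum_nat_add_iff (f := fun n =>
        (if n = 0 then (0:ℝ) else ((n:ℝ) - 1) * h (n-1)) * x ^ n) 1).1 (by exact h1)
    simpa using h2
  -- T4
  have T4 : HasSum (fun n : ℕ => -(h n * x ^ n))
      (-(Real.exp (1 / (1 - x)) * E1 (1 / (1 - x)) - G * Real.exp (x / (1 - x)))) :=
    (hH x hx).neg
  -- T5
  have T5 : HasSum (fun n : ℕ =>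
      (if n = 0 then (1:ℝ) else if n = 1 then -1 else 0) * x ^ n) (1 - x) := by
    have h1 : ∀ n ∉ ({0, 1} : Finset ℕ),
        (if n = 0 then (1:ℝ) else if n = 1 then -1 else 0) * x ^ n = 0 := by
      intro n hn
      simp only [Finset.mem_insert, Finset.mem_singleton] at hn
      push_neg at hn
      rw [if_neg hn.1, if_neg hn.2]
      ring
    have := hasSum_sum_of_ne_finset_zero (L := SummationFilter.unconditional ℕ) h1
    simpa [sub_eq_add_neg] using this
  -- combine
  have total := (((T1.add T2).add T3).add (T4.add T5))
  have hval : D + -2 * x * D + x ^ 2 * D +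
      (-(Real.exp (1 / (1 - x)) * E1 (1 / (1 - x)) - G * Real.exp (x / (1 - x))) + (1 - x))
      = 0 := by
    rw [hDval]
    field_simp
    ring
  rw [hval] at total
  refine total.congr_fun fun n => ?_
  simp only [he]
  ring

/-- For `n ≥ 1`, `bₙ = aₙ·G - aₙ'`, where `G = e·E₁(1)` is the Euler–Gompertz
constant, `aₙ = [zⁿ] exp(z/(1-z))`, and `aₙ'` satisfies `a₀' = 0`, `a₁' = 1`, and
`n·aₙ' - (2n-1)·aₙ₋₁' + (n-2)·aₙ₋₂'` equals `-1` for `n = 2` and `0` for `n ≥ 3`. -/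
theorem stmt_10 (a b a' : ℕ → ℝ)
    (ha : ∀ x : ℝ, |x| < 1 → HasSum (fun n => a n * x ^ n) (Real.exp (x / (1 - x))))
    (hb : ∀ x : ℝ, |x| < 1 → HasSum (fun n => b n * x ^ n)
      (Real.exp (1 / (1 - x)) * E1 (1 / (1 - x))))
    (ha'0 : a' 0 = 0) (ha'1 : a' 1 = 1)
    (ha'2 : (2 : ℝ) * a' 2 - 3 * a' 1 + 0 * a' 0 = -1)
    (ha'rec : ∀ n : ℕ, 3 ≤ n →
      (n : ℝ) * a' n - (2 * n - 1) * a' (n - 1) + ((n : ℝ) - 2) * a' (n - 2) = 0) :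
    ∀ n : ℕ, 1 ≤ n → b n = a n * (Real.exp 1 * E1 1) - a' n := by
  set h : ℕ → ℝ := fun n => b n - Real.exp 1 * E1 1 * a n with hh
  have hH : ∀ x : ℝ, |x| < 1 → HasSum (fun n => h n * x ^ n)
      (Real.exp (1 / (1 - x)) * E1 (1 / (1 - x))
        - Real.exp 1 * E1 1 * Real.exp (x / (1 - x))) := by
    intro x hx
    refine ((hb x hx).sub ((ha x hx).mul_left (Real.exp 1 * E1 1))).congr_fun fun n => ?_
    simp only [hh]
    ring
  have he := series_ode h hH
  have ha0 : a 0 = 1 := by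
    have h1 := ha 0 (by norm_num)
    have h2 : HasSum (fun n => a n * (0:ℝ) ^ n) (a 0) := by
      have := hasSum_single (f := fun n => a n * (0:ℝ) ^ n) 0
        (fun n hn => by simp [zero_pow hn])
      simpa using this
    have := h2.unique h1
    rw [this]
    norm_num
  have hb0 : b 0 = Real.exp 1 * E1 1 := by
    have h1 := hb 0 (by norm_num)
    have h2 : HasSum (fun n => b n * (0:ℝ) ^ n) (b 0) := by
      have := hasSum_single (f := fun n => b n * (0:ℝ) ^ n) 0
        (fun n hn => by simp [zero_pow hn])
      simpa using this
    have := h2.unique h1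
    rw [this]
    norm_num
  have hh0 : h 0 = 0 := by simp only [hh]; rw [hb0, ha0]; ring
  have key := rec_solve h a' ha'0 ha'1 ha'2 ha'rec hh0 he
  intro n hn
  have := key n hn
  simp only [hh] at this
  linarith
end

section
/- For all n ≥ 1, b_n < 0 and b_n > -1/n; in particular b_n → 0 as n → ∞. -/
open MeasureTheory Set

lemma coeff_unique {f : ℝ → ℝ} {a c : ℕ → ℝ}
    (ha : ∀ x : ℝ, |x| < 1 → HasSum (fun n => a n * x ^ n) (f x))
    (hc : ∀ x : ℝ, |x| < 1 → HasSum (fun n => c n * x ^ n) (f x)) : a = c := by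
  have H : ∀ (d : ℕ → ℝ), (∀ x : ℝ, |x| < 1 → HasSum (fun n => d n * x ^ n) (f x)) →
      HasFPowerSeriesAt f (FormalMultilinearSeries.ofScalars ℝ d) 0 := by
    intro d hd
    rw [hasFPowerSeriesAt_iff]
    filter_upwards [Metric.ball_mem_nhds (0:ℝ) one_pos] with z hz
    have h1 := hd z (by simpa [Real.dist_eq] using hz)
    have h2 : (fun n => z ^ n • (FormalMultilinearSeries.ofScalars ℝ d).coeff n)
        = fun n => d n * z ^ n := by
      funext n
      simp [FormalMultilinearSeries.coeff, FormalMultilinearSeries.ofScalars, List.prod_ofFn]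
      ring
    rw [h2]
    simpa using h1
  have := (H a ha).eq_formalMultilinearSeries (H c hc)
  exact FormalMultilinearSeries.ofScalars_series_injective ℝ ℝ this

noncomputable def gg (s : ℝ) : ℝ := Real.exp (-(s/(1-s))) / (1-s)

lemma gg_pos {s : ℝ} (hs : s ∈ Set.Ioo (0:ℝ) 1) : 0 < gg s :=
  div_pos (Real.exp_pos _) (by linarith [hs.2])

lemma gg_le_one {s : ℝ} (hs : s ∈ Set.Ioo (0:ℝ) 1) : gg s ≤ 1 := by
  obtain ⟨h0, h1⟩ := hs
  have hs1 : (0:ℝ) < 1 - s := by linarith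
  have hv : (1:ℝ)/(1-s) = 1 + s/(1-s) := by field_simp; ring
  have key : 1 + s/(1-s) ≤ Real.exp (s/(1-s)) := by
    have := Real.add_one_le_exp (s/(1-s)); linarith
  rw [gg, div_eq_mul_one_div, hv]
  calc Real.exp (-(s/(1-s))) * (1 + s/(1-s))
      ≤ Real.exp (-(s/(1-s))) * Real.exp (s/(1-s)) := by
        apply mul_le_mul_of_nonneg_left key (Real.exp_pos _).le
    _ = 1 := by rw [← Real.exp_add]; simp

lemma gg_contOn : ContinuousOn gg (Set.Ioo 0 1) := by
  apply ContinuousOn.div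
  · exact (Real.continuous_exp.comp_continuousOn
      ((continuousOn_id.div (continuousOn_const.sub continuousOn_id)
        (fun s hs => sub_ne_zero.mpr (ne_of_gt hs.2))).neg))
  · exact continuousOn_const.sub continuousOn_id
  · exact fun s hs => sub_ne_zero.mpr (ne_of_gt hs.2)

lemma intOn {f : ℝ → ℝ} (hf : ContinuousOn f (Set.Ioo 0 1)) {M : ℝ}
    (hM : ∀ s ∈ Set.Ioo (0:ℝ) 1, |f s| ≤ M) :
    MeasureTheory.IntegrableOn f (Set.Ioo 0 1) := by
  refine ⟨hf.aestronglyMeasurable measurableSet_Ioo,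
    MeasureTheory.HasFiniteIntegral.restrict_of_bounded (C := M) ?_ ?_⟩
  · rw [Real.volume_Ioo]; exact ENNReal.ofReal_lt_top
  · filter_upwards [MeasureTheory.ae_restrict_mem measurableSet_Ioo] with s hs
    simpa [Real.norm_eq_abs] using hM s hs

lemma key_subst (x : ℝ) (hx : |x| < 1) :
    Real.exp (1/(1-x)) * E1 (1/(1-x))
      = ∫ s in Set.Ioo (0:ℝ) 1, gg s * ((1-x)/(1-s*x)) := by
  have hx1 : (0:ℝ) < 1 - x := by cases abs_lt.mp hx; linarith
  set y : ℝ := 1/(1-x) with hy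
  set φ : ℝ → ℝ := fun s => y + s/(1-s) with hφ
  have h_img : φ '' Set.Ioo (0:ℝ) 1 = Set.Ioi y := by
    ext t
    constructor
    · rintro ⟨s, hs, rfl⟩
      have h1s : (0:ℝ) < 1 - s := by linarith [hs.2]
      have : 0 < s/(1-s) := div_pos hs.1 h1s
      simpa [φ] using by linarith
    · intro ht
      simp only [Set.mem_Ioi] at ht
      refine ⟨(t-y)/(1+(t-y)), ?_, ?_⟩
      · have hu : 0 < t - y := by linarith
        constructor
        · positivity
        · rw [div_lt_one (by linarith)]; linarith
      · have hu : 0 < t - y := by linarith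
        have h1 : (1:ℝ) + (t-y) ≠ 0 := by positivity
        simp only [φ]
        have h2 : 1 - (t-y)/(1+(t-y)) = 1/(1+(t-y)) := by field_simp; ring
        rw [h2]
        field_simp
        ring
  have h_deriv : ∀ s ∈ Set.Ioo (0:ℝ) 1,
      HasDerivWithinAt φ (1/(1-s)^2) (Set.Ioo (0:ℝ) 1) s := by
    intro s hs
    have h1s : (1:ℝ) - s ≠ 0 := sub_ne_zero.mpr (ne_of_gt hs.2)
    have hd := ((hasDerivAt_id s).div ((hasDerivAt_id s).const_sub 1) h1s).const_add y
    have hd2 : HasDerivAt φ (1/(1-s)^2) s := by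
      refine hd.congr_deriv ?_
      simp only [id]; field_simp; ring
    exact hd2.hasDerivWithinAt
  have h_inj : Set.InjOn φ (Set.Ioo (0:ℝ) 1) := by
    intro p hp q hq h
    have h1p : (0:ℝ) < 1 - p := by linarith [hp.2]
    have h1q : (0:ℝ) < 1 - q := by linarith [hq.2]
    have : p/(1-p) = q/(1-q) := by simpa [φ] using h
    rw [div_eq_div_iff (ne_of_gt h1p) (ne_of_gt h1q)] at this
    nlinarith
  have step1 : Real.exp y * E1 y = ∫ t in Set.Ioi y, Real.exp y * (Real.exp (-t)/t) := by
    rw [E1, MeasureTheory.integral_const_mul]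
  rw [step1, ← h_img,
    integral_image_eq_integral_abs_deriv_smul measurableSet_Ioo h_deriv h_inj]
  apply MeasureTheory.setIntegral_congr_fun measurableSet_Ioo
  intro s hs
  have h1s : (0:ℝ) < 1 - s := by linarith [hs.2]
  have hsx : (0:ℝ) < 1 - s*x := by
    rcases abs_lt.mp hx with ⟨hl, hr⟩
    nlinarith [hs.1, hs.2]
  have hexp : Real.exp y * Real.exp (-(φ s)) = Real.exp (-(s/(1-s))) := by
    rw [← Real.exp_add]
    congr 1
    show y + -(y + s/(1-s)) = -(s/(1-s))
    ring
  have hval : φ s = (1 - s*x)/((1-x)*(1-s)) := by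
    show y + s/(1-s) = (1 - s*x)/((1-x)*(1-s))
    rw [hy]
    field_simp
    ring
  have habs : |1/(1-s)^2| = 1/(1-s)^2 := abs_of_pos (by positivity)
  simp only [smul_eq_mul]
  rw [habs, ← mul_div_assoc, hexp, hval, gg]
  generalize Real.exp (-(s/(1-s))) = E
  have h1s' : (1:ℝ) - s ≠ 0 := ne_of_gt h1s
  have hx1' : (1:ℝ) - x ≠ 0 := ne_of_gt hx1
  have hsx' : (1:ℝ) - s*x ≠ 0 := ne_of_gt hsx
  field_simp

noncomputable def Aa (n : ℕ) : ℝ := ∫ s in Set.Ioo (0:ℝ) 1, gg s * s ^ n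

lemma intA (n : ℕ) : MeasureTheory.IntegrableOn (fun s => gg s * s^n) (Set.Ioo 0 1) := by
  apply intOn (gg_contOn.mul (continuousOn_pow n)) (M := 1)
  intro s hs
  have h1 := gg_pos hs
  have h2 := gg_le_one hs
  have h3 : (0:ℝ) ≤ s^n := pow_nonneg hs.1.le n
  have h4 : s^n ≤ 1 := pow_le_one₀ hs.1.le hs.2.le
  show |gg s * s^n| ≤ 1
  rw [abs_of_nonneg (by positivity)]
  nlinarith

lemma hasSum_S (x : ℝ) (hx : |x| < 1) :
    HasSum (fun n => Aa n * x^n)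
      (∫ s in Set.Ioo (0:ℝ) 1, gg s * (1/(1-s*x))) := by
  set μ := MeasureTheory.volume.restrict (Set.Ioo (0:ℝ) 1)
  set F : ℕ → ℝ → ℝ := fun n s => gg s * s^n * x^n with hF
  have hF_int : ∀ n, MeasureTheory.Integrable (F n) μ := fun n => (intA n).mul_const _
  have hbound : ∀ n, (∫ s, ‖F n s‖ ∂μ) ≤ |x|^n := by
    intro n
    have hconst : MeasureTheory.IntegrableOn (fun _ : ℝ => |x|^n) (Set.Ioo (0:ℝ) 1) := by
      apply (MeasureTheory.integrableOn_const_iff (C := |x|^n)).mpr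
      right; rw [Real.volume_Ioo]; exact ENNReal.ofReal_lt_top
    have := MeasureTheory.setIntegral_mono_on (hF_int n).norm hconst measurableSet_Ioo ?_
    · calc (∫ s, ‖F n s‖ ∂μ) ≤ ∫ _ in Set.Ioo (0:ℝ) 1, |x|^n := this
        _ = |x|^n := by simp [Real.volume_Ioo]
    · intro s hs
      have h1 := gg_pos hs
      have h2 := gg_le_one hs
      have h3 : (0:ℝ) ≤ s^n := pow_nonneg hs.1.le n
      have h4 : s^n ≤ 1 := pow_le_one₀ hs.1.le hs.2.le
      have h5 : |x|^n = |x^n| := (abs_pow x n).symm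
      simp only [F, Real.norm_eq_abs, abs_mul, h5]
      rw [abs_of_pos h1, abs_of_nonneg h3]
      nlinarith [abs_nonneg (x^n), mul_le_one₀ h2 h3 h4, mul_le_mul_of_nonneg_right (mul_le_one₀ h2 h3 h4) (abs_nonneg (x^n))]
  have hF_sum : Summable fun n => ∫ s, ‖F n s‖ ∂μ := by
    apply Summable.of_nonneg_of_le
      (fun n => MeasureTheory.integral_nonneg (fun s => norm_nonneg _)) hbound
    exact summable_geometric_of_lt_one (abs_nonneg x) hx
  have H := MeasureTheory.hasSum_integral_of_summable_integral_norm hF_int hF_sum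
  have e1 : (fun n => ∫ s, F n s ∂μ) = fun n => Aa n * x^n := by
    funext n
    simp only [F]
    rw [MeasureTheory.integral_mul_const]
    rfl
  have e2 : (∫ s, (∑' n, F n s) ∂μ) = ∫ s in Set.Ioo (0:ℝ) 1, gg s * (1/(1-s*x)) := by
    apply MeasureTheory.setIntegral_congr_fun measurableSet_Ioo
    intro s hs
    have hsx : ‖s*x‖ < 1 := by
      rw [Real.norm_eq_abs, abs_mul, abs_of_pos hs.1]
      nlinarith [hs.1, hs.2, abs_nonneg x]
    have : ∀ n, F n s = gg s * (s*x)^n := by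
      intro n; simp only [F, mul_pow]; ring
    simp only [this]
    rw [tsum_mul_left, tsum_geometric_of_norm_lt_one hsx, one_div]
  rw [e1, e2] at H
  exact H

lemma hasSum_c (x : ℝ) (hx : |x| < 1) :
    HasSum (fun n => (Aa n - (if n = 0 then 0 else Aa (n-1))) * x^n)
      (Real.exp (1/(1-x)) * E1 (1/(1-x))) := by
  set S := ∫ s in Set.Ioo (0:ℝ) 1, gg s * (1/(1-s*x)) with hSdef
  have hS := hasSum_S x hx
  set d : ℕ → ℝ := fun n => (if n = 0 then 0 else Aa (n-1)) * x^n with hd'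
  have hd : HasSum d (S * x) := by
    have h1 := hS.mul_right x
    have h2 : (fun n => Aa n * x^n * x) = fun n => d (n+1) := by
      funext n
      simp only [d, Nat.add_sub_cancel, if_neg (Nat.succ_ne_zero n)]
      rw [pow_succ]; ring
    rw [h2] at h1
    have h3 := (hasSum_nat_add_iff 1).mp h1
    have h4 : S*x + ∑ i ∈ Finset.range 1, d i = S*x := by simp [d]
    rwa [h4] at h3
  have hsub := hS.sub hd
  have e3 : (fun n => Aa n * x^n - d n)
      = fun n => (Aa n - (if n = 0 then 0 else Aa (n-1))) * x^n := by
    funext n; simp only [d]; ring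
  rw [e3] at hsub
  have hfx : Real.exp (1/(1-x)) * E1 (1/(1-x)) = S - S*x := by
    rw [key_subst x hx]
    have e4 : (fun s => gg s * ((1-x)/(1-s*x)))
        = fun s => (1-x) * (gg s * (1/(1-s*x))) := by
      funext s; ring
    rw [e4, MeasureTheory.integral_const_mul, ← hSdef]
    ring
  rw [hfx]
  exact hsub

lemma int_pow_Ioo (m : ℕ) : (∫ s in Set.Ioo (0:ℝ) 1, s^m) = 1/(m+1) := by
  rw [← MeasureTheory.integral_Ioc_eq_integral_Ioo,
    ← intervalIntegral.integral_of_le zero_le_one, integral_pow]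
  norm_num

lemma exp_term_contOn : ContinuousOn (fun s : ℝ => Real.exp (-(s/(1-s)))) (Set.Ioo 0 1) :=
  Real.continuous_exp.comp_continuousOn
    ((continuousOn_id.div (continuousOn_const.sub continuousOn_id)
      (fun s hs => sub_ne_zero.mpr (ne_of_gt hs.2))).neg)

lemma pos_int {h : ℝ → ℝ} (hcont : ContinuousOn h (Set.Ioo 0 1))
    (hint : MeasureTheory.IntegrableOn h (Set.Ioo 0 1))
    (hpos : ∀ s ∈ Set.Ioo (0:ℝ) 1, 0 < h s) :
    0 < ∫ s in Set.Ioo (0:ℝ) 1, h s := by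
  rw [MeasureTheory.setIntegral_pos_iff_support_of_nonneg_ae ?_ hint]
  · apply lt_of_lt_of_le ?_ (MeasureTheory.measure_mono
      (show Set.Ioo (0:ℝ) 1 ⊆ Function.support h ∩ Set.Ioo 0 1 from
        fun s hs => ⟨ne_of_gt (hpos s hs), hs⟩))
    rw [Real.volume_Ioo]; norm_num
  · filter_upwards [MeasureTheory.ae_restrict_mem measurableSet_Ioo] with s hs
    exact (hpos s hs).le

lemma exp_factor_le_one {s : ℝ} (hs : s ∈ Set.Ioo (0:ℝ) 1) :
    Real.exp (-(s/(1-s))) < 1 := by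
  rw [Real.exp_lt_one_iff]
  have : 0 < s/(1-s) := div_pos hs.1 (by linarith [hs.2])
  linarith

lemma intP (m : ℕ) :
    MeasureTheory.IntegrableOn (fun s => Real.exp (-(s/(1-s))) * s^m) (Set.Ioo 0 1) := by
  apply intOn (exp_term_contOn.mul (continuousOn_pow m)) (M := 1)
  intro s hs
  have h1 : (0:ℝ) < Real.exp (-(s/(1-s))) := Real.exp_pos _
  have h2 := (exp_factor_le_one hs).le
  have h3 : (0:ℝ) ≤ s^m := pow_nonneg hs.1.le m
  have h4 : s^m ≤ 1 := pow_le_one₀ hs.1.le hs.2.le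
  show |Real.exp (-(s/(1-s))) * s^m| ≤ 1
  rw [abs_of_nonneg (by positivity)]
  nlinarith

lemma intPow (m : ℕ) : MeasureTheory.IntegrableOn (fun s : ℝ => s^m) (Set.Ioo 0 1) := by
  apply intOn (continuousOn_pow m) (M := 1)
  intro s hs
  rw [abs_of_nonneg (pow_nonneg hs.1.le m)]
  exact pow_le_one₀ hs.1.le hs.2.le

/-- For all `n ≥ 1`, `bₙ < 0` and `bₙ > -1/n`; in particular `bₙ → 0` as `n → ∞`. -/
theorem stmt_12 (b : ℕ → ℝ)
    (hb : ∀ x : ℝ, |x| < 1 → HasSum (fun n => b n * x ^ n)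
      (Real.exp (1 / (1 - x)) * E1 (1 / (1 - x)))) :
    (∀ n : ℕ, 1 ≤ n → b n < 0 ∧ b n > -1 / n) ∧
    Filter.Tendsto b Filter.atTop (nhds 0) := by
  have hbc : b = fun n => Aa n - (if n = 0 then 0 else Aa (n-1)) :=
    coeff_unique (f := fun x => Real.exp (1/(1-x)) * E1 (1/(1-x))) hb
      (fun x hx => hasSum_c x hx)
  have hP : ∀ m : ℕ, b (m+1)
      = -(∫ s in Set.Ioo (0:ℝ) 1, Real.exp (-(s/(1-s))) * s^m) := by
    intro m
    rw [hbc]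
    simp only [Nat.add_sub_cancel, if_neg (Nat.succ_ne_zero m)]
    rw [Aa, Aa, ← MeasureTheory.integral_sub (intA (m+1)) (intA m),
      ← MeasureTheory.integral_neg]
    apply MeasureTheory.setIntegral_congr_fun measurableSet_Ioo
    intro s hs
    have h1s : (1:ℝ) - s ≠ 0 := sub_ne_zero.mpr (ne_of_gt hs.2)
    show gg s * s^(m+1) - gg s * s^m = -(Real.exp (-(s/(1-s))) * s^m)
    rw [gg]
    field_simp
    ring
  have hPpos : ∀ m : ℕ, 0 < ∫ s in Set.Ioo (0:ℝ) 1, Real.exp (-(s/(1-s))) * s^m := by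
    intro m
    apply pos_int (exp_term_contOn.mul (continuousOn_pow m)) (intP m)
    intro s hs
    exact mul_pos (Real.exp_pos _) (pow_pos hs.1 m)
  have hPlt : ∀ m : ℕ, (∫ s in Set.Ioo (0:ℝ) 1, Real.exp (-(s/(1-s))) * s^m)
      < 1/(m+1) := by
    intro m
    have hQ : 0 < ∫ s in Set.Ioo (0:ℝ) 1, (s^m - Real.exp (-(s/(1-s))) * s^m) := by
      apply pos_int ((continuousOn_pow m).sub (exp_term_contOn.mul (continuousOn_pow m)))
        ((intPow m).sub (intP m))
      intro s hs
      have h1 := exp_factor_le_one hs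
      have h2 : (0:ℝ) < s^m := pow_pos hs.1 m
      show 0 < s^m - Real.exp (-(s/(1-s))) * s^m
      nlinarith
    rw [MeasureTheory.integral_sub (intPow m) (intP m), int_pow_Ioo m] at hQ
    linarith
  have part1 : ∀ n : ℕ, 1 ≤ n → b n < 0 ∧ b n > -1 / n := by
    intro n hn
    match n, hn with
    | (m+1), _ =>
      constructor
      · rw [hP m]; linarith [hPpos m]
      · rw [hP m, gt_iff_lt, neg_div, neg_lt_neg_iff]
        have := hPlt m
        push_cast
        calc (∫ s in Set.Ioo (0:ℝ) 1, Real.exp (-(s/(1-s))) * s^m)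
            < 1/(m+1) := this
          _ = 1/((m:ℝ)+1) := by norm_num
  refine ⟨part1, ?_⟩
  have hg : Filter.Tendsto (fun n : ℕ => -1/(n:ℝ)) Filter.atTop (nhds 0) := by
    have := (tendsto_one_div_atTop_nhds_zero_nat (𝕜 := ℝ)).neg
    simp only [neg_zero] at this
    simpa [neg_div] using this
  apply tendsto_of_tendsto_of_tendsto_of_le_of_le' hg tendsto_const_nhds
  · filter_upwards [Filter.eventually_atTop.mpr ⟨1, fun n hn => hn⟩] with n hn
    exact (part1 n hn).2.le
  · filter_upwards [Filter.eventually_atTop.mpr ⟨1, fun n hn => hn⟩] with n hn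
    exact (part1 n hn).1.le
end
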